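/- Let I ⊆ ℝ be an open interval, r, h, H : I → ℝ differentiable with r > 0 and H′ = h′/r² on I. Define x, x* : I × ℝ → ℝ³ by x(u, v) = (r(u) cos v, r(u) sin v, h(u)) and x*(u, v) = (−cos v / r(u), −sin v / r(u), H(u)). Then x*_u = (1/r²) x_u and x*_v = −(1/r²) x_v at every point, and B(x_u, x_v) = 0 both for the Euclidean inner product B(x,y) = x₁y₁ + x₂y₂ + x₃y₃ and for the Minkowski form B_M(x,y) = x₁y₁ + x₂y₂ − x₃y₃; hence (x, x*) is a Christoffel pair (the surface of revolution and its dual) simultaneously in Euclidean and in Minkowski space, so the Minkowski Christoffel dual of a surface of revolution with timelike axis coincides with its Euclidean dual. (Paper: Section 3, computation for surfaces of revolution and the catenoid.) -/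

import Mathlib

/-- Partial derivative in the `u`-direction. -/
noncomputable def pdu (x : ℝ × ℝ → ℝ × ℝ × ℝ) (p : ℝ × ℝ) : ℝ × ℝ × ℝ :=
  fderiv ℝ x p (1, 0)

/-- Partial derivative in the `v`-direction. -/
noncomputable def pdv (x : ℝ × ℝ → ℝ × ℝ × ℝ) (p : ℝ × ℝ) : ℝ × ℝ × ℝ :=
  fderiv ℝ x p (0, 1)

/-- The Euclidean inner product on `ℝ³`. -/
def BE (x y : ℝ × ℝ × ℝ) : ℝ := x.1 * y.1 + x.2.1 * y.2.1 + x.2.2 * y.2.2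

/-- The Minkowski bilinear form on `ℝ³`. -/
def BM (x y : ℝ × ℝ × ℝ) : ℝ := x.1 * y.1 + x.2.1 * y.2.1 - x.2.2 * y.2.2

/-- **Section 3.** A surface of revolution `x(u,v) = (r cos v, r sin v, h)` and its dual
`x*(u,v) = (−cos v/r, −sin v/r, H)` (with `H′ = h′/r²`) satisfy `x*_u = (1/r²) x_u`,
`x*_v = −(1/r²) x_v`, and the parameter lines are orthogonal simultaneously for the
Euclidean and the Minkowski inner product; hence `(x, x*)` is a Christoffel pair in both
geometries, so the Minkowski Christoffel dual of a surface of revolution with timelike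
axis coincides with its Euclidean dual. -/
theorem surface_of_revolution_dual
    (a b : ℝ) (I : Set ℝ) (hI : I = Set.Ioo a b)
    (r h H : ℝ → ℝ)
    (hr : ∀ u ∈ I, DifferentiableAt ℝ r u)
    (hh : ∀ u ∈ I, DifferentiableAt ℝ h u)
    (hH : ∀ u ∈ I, DifferentiableAt ℝ H u)
    (hrpos : ∀ u ∈ I, 0 < r u)
    (hH' : ∀ u ∈ I, deriv H u = deriv h u / (r u) ^ 2)
    (x xs : ℝ × ℝ → ℝ × ℝ × ℝ)
    (hx : ∀ u v : ℝ, x (u, v) = (r u * Real.cos v, r u * Real.sin v, h u))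
    (hxs : ∀ u v : ℝ, xs (u, v) = (-Real.cos v / r u, -Real.sin v / r u, H u)) :
    ∀ u ∈ I, ∀ v : ℝ,
      pdu xs (u, v) = (1 / (r u) ^ 2) • pdu x (u, v) ∧
      pdv xs (u, v) = -(1 / (r u) ^ 2) • pdv x (u, v) ∧
      BE (pdu x (u, v)) (pdv x (u, v)) = 0 ∧
      BM (pdu x (u, v)) (pdv x (u, v)) = 0 := by
  intro u hu v
  have hrne : r u ≠ 0 := ne_of_gt (hrpos u hu)
  have hx' : x = fun p : ℝ × ℝ => (r p.1 * Real.cos p.2, r p.1 * Real.sin p.2, h p.1) :=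
    funext fun p => hx p.1 p.2
  have hxs' : xs = fun p : ℝ × ℝ => (-Real.cos p.2 / r p.1, -Real.sin p.2 / r p.1, H p.1) :=
    funext fun p => hxs p.1 p.2
  have hrf : HasFDerivAt (fun p : ℝ × ℝ => r p.1)
      (deriv r u • ContinuousLinearMap.fst ℝ ℝ ℝ) (u, v) :=
    ((hr u hu).hasDerivAt).comp_hasFDerivAt (u, v) hasFDerivAt_fst
  have hhf : HasFDerivAt (fun p : ℝ × ℝ => h p.1)
      (deriv h u • ContinuousLinearMap.fst ℝ ℝ ℝ) (u, v) :=
    ((hh u hu).hasDerivAt).comp_hasFDerivAt (u, v) hasFDerivAt_fst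
  have hHf : HasFDerivAt (fun p : ℝ × ℝ => H p.1)
      (deriv H u • ContinuousLinearMap.fst ℝ ℝ ℝ) (u, v) :=
    ((hH u hu).hasDerivAt).comp_hasFDerivAt (u, v) hasFDerivAt_fst
  have hcos : HasFDerivAt (fun p : ℝ × ℝ => Real.cos p.2)
      ((-Real.sin v) • ContinuousLinearMap.snd ℝ ℝ ℝ) (u, v) :=
    (Real.hasDerivAt_cos v).comp_hasFDerivAt (f := Prod.snd) (u, v) (hasFDerivAt_snd (p := (u, v)))
  have hsin : HasFDerivAt (fun p : ℝ × ℝ => Real.sin p.2)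
      ((Real.cos v) • ContinuousLinearMap.snd ℝ ℝ ℝ) (u, v) :=
    (Real.hasDerivAt_sin v).comp_hasFDerivAt (f := Prod.snd) (u, v) (hasFDerivAt_snd (p := (u, v)))
  have hX : HasFDerivAt (fun p : ℝ × ℝ => (r p.1 * Real.cos p.2, r p.1 * Real.sin p.2, h p.1)) _ (u, v) := HasFDerivAt.prodMk (hrf.mul hcos) (HasFDerivAt.prodMk (hrf.mul hsin) hhf)
  have hinv : HasFDerivAt (fun p : ℝ × ℝ => (r p.1)⁻¹)
      ((-deriv r u / r u ^ 2) • ContinuousLinearMap.fst ℝ ℝ ℝ) (u, v) :=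
    (((hr u hu).hasDerivAt).inv hrne).comp_hasFDerivAt (f := Prod.fst) (u, v) (hasFDerivAt_fst (p := (u, v)))
  have hxs'' : xs = fun p : ℝ × ℝ =>
      (-Real.cos p.2 * (r p.1)⁻¹, -Real.sin p.2 * (r p.1)⁻¹, H p.1) := by
    rw [hxs']; funext p; simp [div_eq_mul_inv]
  have hXs : HasFDerivAt (fun p : ℝ × ℝ =>
        (-Real.cos p.2 * (r p.1)⁻¹, -Real.sin p.2 * (r p.1)⁻¹, H p.1)) _ (u, v) := (HasFDerivAt.prodMk (hcos.neg.mul hinv) (HasFDerivAt.prodMk (hsin.neg.mul hinv) hHf))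
  have hpux : pdu x (u, v) = (deriv r u * Real.cos v, deriv r u * Real.sin v, deriv h u) := by
    rw [pdu, hx', hX.fderiv]
    simp [mul_comm]
  have hpvx : pdv x (u, v) = (-(r u * Real.sin v), r u * Real.cos v, 0) := by
    rw [pdv, hx', hX.fderiv]
    simp
  have hpuxs : pdu xs (u, v) =
      (Real.cos v * deriv r u / (r u) ^ 2, Real.sin v * deriv r u / (r u) ^ 2, deriv H u) := by
    rw [pdu, hxs'', hXs.fderiv]
    simp
    constructor <;> ring
  have hpvxs : pdv xs (u, v) = (Real.sin v / r u, -Real.cos v / r u, 0) := by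
    rw [pdv, hxs'', hXs.fderiv]
    simp
    constructor <;> ring
  refine ⟨?_, ?_, ?_, ?_⟩
  · rw [hpuxs, hpux, Prod.smul_def, Prod.smul_def, hH' u hu]
    simp [smul_eq_mul]
    constructor <;> field_simp <;> exact ⟨trivial, trivial⟩
  · rw [hpvxs, hpvx, Prod.smul_def, Prod.smul_def]
    simp [smul_eq_mul]
    constructor <;> field_simp
  · rw [hpux, hpvx]; simp [BE]; ring
  · rw [hpux, hpvx]; simp [BM]; ring
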